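/- Assume Axioms A3 and A4 hold with uniform convergence on compact sets, that d^x is nondegenerate for every x, and let Σ^x(u, v) = lim_{ε→0+} Σ_ε^x(u, v) and inv^x(u) = lim_{ε→0+} inv_ε^x(u) = Δ^x(u, x) (these limits being uniform on compact sets). Then (X, Σ^x) is a group with neutral element x: for all u, v, w ∈ X, Σ^x(u, Σ^x(v, w)) = Σ^x(Σ^x(u, v), w); Σ^x(x, u) = Σ^x(u, x) = u; Σ^x(u, inv^x(u)) = Σ^x(inv^x(u), u) = x; and inv^x(inv^x(u)) = u. -/

import Mathlib

open Filter Topology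

lemma movingPoint_aux {β γ : Type*} [TopologicalSpace β] [WeaklyLocallyCompactSpace β]
    [UniformSpace γ]
    {F : ℝ → β → γ} {f : β → γ}
    (hK : ∀ K : Set β, IsCompact K → TendstoUniformlyOn F f (𝓝[>] (0:ℝ)) K)
    (hFc : ∀ ε : ℝ, 0 < ε → Continuous (F ε))
    {g : ℝ → β} {p : β} (hg : Tendsto g (𝓝[>] (0:ℝ)) (𝓝 p)) :
    Tendsto (fun ε => F ε (g ε)) (𝓝[>] (0:ℝ)) (𝓝 (f p)) := by
  obtain ⟨K, hKc, hKn⟩ := exists_compact_mem_nhds p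
  have h := hK K hKc
  have hfc : ContinuousOn f K := by
    refine h.continuousOn (Filter.Eventually.frequently ?_)
    filter_upwards [self_mem_nhdsWithin] with ε hε
    exact (hFc ε hε).continuousOn
  refine h.tendsto_comp (hfc.continuousWithinAt (mem_of_mem_nhds hKn)) ?_
  rw [tendsto_nhdsWithin_iff]
  exact ⟨hg, hg hKn⟩

/-- Under axioms A3, A4 (uniform on compact sets) with each `d^x`
nondegenerate, let `Σ^x = lim Σ_ε^x` and `inv^x(u) = lim inv_ε^x(u) = Δ^x(u, x)`
(uniform limits on compact sets). Then `(X, Σ^x)` is a group with neutral element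
`x`: `Σ^x` is associative, `Σ^x(x,u) = Σ^x(u,x) = u`,
`Σ^x(u, inv^x(u)) = Σ^x(inv^x(u), u) = x`, and `inv^x(inv^x(u)) = u`. -/
theorem tangent_space_group_structure
    {X : Type*} [MetricSpace X] [CompleteSpace X] [LocallyCompactSpace X]
    (δ : ℝ → X → X → X)
    (hcomp : ∀ ε μ : ℝ, 0 < ε → 0 < μ → ∀ x y : X, δ ε x (δ μ x y) = δ (ε * μ) x y)
    (hone : ∀ x y : X, δ 1 x y = y)
    (hfix : ∀ ε : ℝ, 0 < ε → ∀ x : X, δ ε x x = x)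
    (hcont : ContinuousOn (fun p : ℝ × X × X => δ p.1 p.2.1 p.2.2) {p | 0 < p.1})
    (hlim0 : ∀ x y : X, Tendsto (fun ε : ℝ => δ ε x y) (𝓝[>] (0 : ℝ)) (𝓝 x))
    (dx : X → X → X → ℝ)
    (hA3 : ∀ K : Set (X × X × X), IsCompact K →
      TendstoUniformlyOn
        (fun (ε : ℝ) (p : X × X × X) => (1 / ε) * dist (δ ε p.1 p.2.1) (δ ε p.1 p.2.2))
        (fun p => dx p.1 p.2.1 p.2.2) (𝓝[>] (0 : ℝ)) K)
    (ΔL : X → X → X → X)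
    (hA4 : ∀ K : Set (X × X × X), IsCompact K →
      TendstoUniformlyOn
        (fun (ε : ℝ) (p : X × X × X) => δ ε⁻¹ (δ ε p.1 p.2.1) (δ ε p.1 p.2.2))
        (fun p => ΔL p.1 p.2.1 p.2.2) (𝓝[>] (0 : ℝ)) K)
    (hnd : ∀ x v w : X, dx x v w = 0 → v = w)
    (SigL : X → X → X → X)
    (hSig : ∀ K : Set (X × X × X), IsCompact K →
      TendstoUniformlyOn
        (fun (ε : ℝ) (p : X × X × X) => δ ε⁻¹ p.1 (δ ε (δ ε p.1 p.2.1) p.2.2))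
        (fun p => SigL p.1 p.2.1 p.2.2) (𝓝[>] (0 : ℝ)) K)
    (invL : X → X → X)
    (hinv : ∀ K : Set (X × X), IsCompact K →
      TendstoUniformlyOn
        (fun (ε : ℝ) (p : X × X) => δ ε⁻¹ (δ ε p.1 p.2) p.1)
        (fun p => invL p.1 p.2) (𝓝[>] (0 : ℝ)) K)
    (hinv_eq : ∀ x u : X, invL x u = ΔL x u x) :
    ∀ x u v w : X,
      SigL x u (SigL x v w) = SigL x (SigL x u v) w ∧
      SigL x x u = u ∧ SigL x u x = u ∧
      SigL x u (invL x u) = x ∧ SigL x (invL x u) u = x ∧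
      invL x (invL x u) = u := by
  intro x u v w
  set l : Filter ℝ := 𝓝[>] (0:ℝ) with hl
  -- continuity of dilations at fixed positive parameter
  have hδc : ∀ ε : ℝ, 0 < ε → Continuous (fun q : X × X => δ ε q.1 q.2) := by
    intro ε hε
    rw [continuous_iff_continuousAt]
    intro q
    have hopen : IsOpen {p : ℝ × X × X | 0 < p.1} :=
      isOpen_lt continuous_const continuous_fst
    have h1 : ContinuousAt (fun p : ℝ × X × X => δ p.1 p.2.1 p.2.2) (ε, q) :=
      hcont.continuousAt (hopen.mem_nhds hε)
    exact h1.comp ((continuous_const.prodMk continuous_id).continuousAt)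
  -- families
  set F : ℝ → X × X × X → X :=
    fun ε p => δ ε⁻¹ p.1 (δ ε (δ ε p.1 p.2.1) p.2.2) with hF
  set G : ℝ → X × X × X → X :=
    fun ε p => δ ε⁻¹ (δ ε p.1 p.2.1) (δ ε p.1 p.2.2) with hG
  set H : ℝ → X × X × X → ℝ :=
    fun ε p => (1 / ε) * dist (δ ε p.1 p.2.1) (δ ε p.1 p.2.2) with hH
  have c21 : Continuous (fun p : X × X × X => p.2.1) :=
    continuous_fst.comp continuous_snd
  have c22 : Continuous (fun p : X × X × X => p.2.2) :=
    continuous_snd.comp continuous_snd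
  have hFc : ∀ ε : ℝ, 0 < ε → Continuous (F ε) := by
    intro ε hε
    have h1 := hδc ε hε
    have h2 := hδc ε⁻¹ (inv_pos.mpr hε)
    have c1 : Continuous (fun p : X × X × X => δ ε p.1 p.2.1) :=
      h1.comp (continuous_fst.prodMk c21)
    have c2 : Continuous (fun p : X × X × X => δ ε (δ ε p.1 p.2.1) p.2.2) :=
      h1.comp (c1.prodMk c22)
    exact h2.comp (continuous_fst.prodMk c2)
  have hGc : ∀ ε : ℝ, 0 < ε → Continuous (G ε) := by
    intro ε hε
    have h1 := hδc ε hε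
    have h2 := hδc ε⁻¹ (inv_pos.mpr hε)
    have c1 : Continuous (fun p : X × X × X => δ ε p.1 p.2.1) :=
      h1.comp (continuous_fst.prodMk c21)
    have c2 : Continuous (fun p : X × X × X => δ ε p.1 p.2.2) :=
      h1.comp (continuous_fst.prodMk c22)
    exact h2.comp (c1.prodMk c2)
  have hHc : ∀ ε : ℝ, 0 < ε → Continuous (H ε) := by
    intro ε hε
    have h1 := hδc ε hε
    have c1 : Continuous (fun p : X × X × X => δ ε p.1 p.2.1) :=
      h1.comp (continuous_fst.prodMk c21)
    have c2 : Continuous (fun p : X × X × X => δ ε p.1 p.2.2) :=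
      h1.comp (continuous_fst.prodMk c22)
    exact continuous_const.mul (c1.dist c2)
  -- moving point limit lemmas
  have mpS : ∀ {g : ℝ → X × X × X} {p : X × X × X}, Tendsto g l (𝓝 p) →
      Tendsto (fun ε => F ε (g ε)) l (𝓝 (SigL p.1 p.2.1 p.2.2)) :=
    fun hg => movingPoint_aux hSig hFc hg
  have mpD : ∀ {g : ℝ → X × X × X} {p : X × X × X}, Tendsto g l (𝓝 p) →
      Tendsto (fun ε => G ε (g ε)) l (𝓝 (ΔL p.1 p.2.1 p.2.2)) :=
    fun hg => movingPoint_aux hA4 hGc hg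
  have mpH : ∀ {g : ℝ → X × X × X} {p : X × X × X}, Tendsto g l (𝓝 p) →
      Tendsto (fun ε => H ε (g ε)) l (𝓝 (dx p.1 p.2.1 p.2.2)) :=
    fun hg => movingPoint_aux hA3 hHc hg
  -- exact cancellation identities
  have hli : ∀ ε : ℝ, 0 < ε → ∀ z y : X, δ ε⁻¹ z (δ ε z y) = y := by
    intro ε hε z y
    rw [hcomp _ _ (inv_pos.mpr hε) hε, inv_mul_cancel₀ hε.ne', hone]
  have hri : ∀ ε : ℝ, 0 < ε → ∀ z y : X, δ ε z (δ ε⁻¹ z y) = y := by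
    intro ε hε z y
    rw [hcomp _ _ hε (inv_pos.mpr hε), mul_inv_cancel₀ hε.ne', hone]
  have hpos : ∀ᶠ ε in l, (0:ℝ) < ε := self_mem_nhdsWithin
  -- constant-point tendsto
  have mpSc : ∀ a b c : X, Tendsto (fun ε => F ε (a, b, c)) l (𝓝 (SigL a b c)) :=
    fun a b c => mpS (g := fun _ => (a, b, c)) tendsto_const_nhds
  have mpDc : ∀ a b c : X, Tendsto (fun ε => G ε (a, b, c)) l (𝓝 (ΔL a b c)) :=
    fun a b c => mpD (g := fun _ => (a, b, c)) tendsto_const_nhds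
  -- (1) left identity
  have hLid : ∀ a : X, SigL x x a = a := by
    intro a
    have h1 := mpSc x x a
    have h2 : ∀ᶠ ε in l, F ε (x, x, a) = a := by
      filter_upwards [hpos] with ε hε
      show δ ε⁻¹ x (δ ε (δ ε x x) a) = a
      rw [hfix ε hε, hli ε hε]
    exact tendsto_nhds_unique ((tendsto_congr' h2).mp h1) tendsto_const_nhds
  -- (2) SigL x a (ΔL x a b) = b
  have hSD : ∀ a b : X, SigL x a (ΔL x a b) = b := by
    intro a b
    have hg : Tendsto (fun ε => ((x : X), (a, G ε (x, a, b)))) l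
        (𝓝 (x, a, ΔL x a b)) :=
      tendsto_const_nhds.prodMk_nhds (tendsto_const_nhds.prodMk_nhds (mpDc x a b))
    have h1 := mpS hg
    have h2 : ∀ᶠ ε in l, F ε (x, a, G ε (x, a, b)) = b := by
      filter_upwards [hpos] with ε hε
      show δ ε⁻¹ x (δ ε (δ ε x a) (δ ε⁻¹ (δ ε x a) (δ ε x b))) = b
      rw [hri ε hε, hli ε hε]
    exact tendsto_nhds_unique ((tendsto_congr' h2).mp h1) tendsto_const_nhds
  -- (3) ΔL x a (SigL x a b) = b
  have hDS : ∀ a b : X, ΔL x a (SigL x a b) = b := by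
    intro a b
    have hg : Tendsto (fun ε => ((x : X), (a, F ε (x, a, b)))) l
        (𝓝 (x, a, SigL x a b)) :=
      tendsto_const_nhds.prodMk_nhds (tendsto_const_nhds.prodMk_nhds (mpSc x a b))
    have h1 := mpD hg
    have h2 : ∀ᶠ ε in l, G ε (x, a, F ε (x, a, b)) = b := by
      filter_upwards [hpos] with ε hε
      show δ ε⁻¹ (δ ε x a) (δ ε x (δ ε⁻¹ x (δ ε (δ ε x a) b))) = b
      rw [hri ε hε, hli ε hε]
    exact tendsto_nhds_unique ((tendsto_congr' h2).mp h1) tendsto_const_nhds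
  -- (4) associativity
  have hAssoc : ∀ a b c : X,
      SigL x a (SigL x b c) = SigL x (SigL x a b) c := by
    intro a b c
    have hy : Tendsto (fun ε => δ ε x a) l (𝓝 x) := hlim0 x a
    have hz : Tendsto (fun ε => F ε (δ ε x a, b, c)) l (𝓝 (SigL x b c)) :=
      mpS (hy.prodMk_nhds (tendsto_const_nhds.prodMk_nhds tendsto_const_nhds))
    have hL : Tendsto (fun ε => F ε (x, a, F ε (δ ε x a, b, c))) l
        (𝓝 (SigL x a (SigL x b c))) :=
      mpS (tendsto_const_nhds.prodMk_nhds (tendsto_const_nhds.prodMk_nhds hz))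
    have hR : Tendsto (fun ε => F ε (x, F ε (x, a, b), c)) l
        (𝓝 (SigL x (SigL x a b) c)) :=
      mpS (tendsto_const_nhds.prodMk_nhds ((mpSc x a b).prodMk_nhds tendsto_const_nhds))
    have h2 : ∀ᶠ ε in l,
        F ε (x, a, F ε (δ ε x a, b, c)) = F ε (x, F ε (x, a, b), c) := by
      filter_upwards [hpos] with ε hε
      show δ ε⁻¹ x (δ ε (δ ε x a)
            (δ ε⁻¹ (δ ε x a) (δ ε (δ ε (δ ε x a) b) c)))
          = δ ε⁻¹ x (δ ε (δ ε x (δ ε⁻¹ x (δ ε (δ ε x a) b))) c)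
      rw [hri ε hε, hri ε hε]
    exact tendsto_nhds_unique ((tendsto_congr' h2).mp hL) hR
  -- (5) right identity, via A3 and nondegeneracy
  have hRid : ∀ a : X, SigL x a x = a := by
    intro a
    have haε : Tendsto (fun ε => F ε (x, a, x)) l (𝓝 (SigL x a x)) := mpSc x a x
    have h1 : Tendsto (fun ε => H ε (x, F ε (x, a, x), a)) l
        (𝓝 (dx x (SigL x a x) a)) :=
      mpH (tendsto_const_nhds.prodMk_nhds (haε.prodMk_nhds tendsto_const_nhds))
    have h2 : Tendsto (fun ε => H ε (δ ε x a, x, δ ε x a)) l (𝓝 (dx x x x)) :=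
      mpH ((hlim0 x a).prodMk_nhds (tendsto_const_nhds.prodMk_nhds (hlim0 x a)))
    have hxx : dx x x x = 0 := by
      have h3 : ∀ᶠ ε in l, H ε (x, x, x) = 0 := by
        filter_upwards [hpos] with ε hε
        show (1 / ε) * dist (δ ε x x) (δ ε x x) = 0
        rw [dist_self, mul_zero]
      exact tendsto_nhds_unique
        ((tendsto_congr' h3).mp (mpH (g := fun _ => (x, x, x)) tendsto_const_nhds))
        tendsto_const_nhds
    have h4 : ∀ᶠ ε in l, H ε (x, F ε (x, a, x), a) = H ε (δ ε x a, x, δ ε x a) := by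
      filter_upwards [hpos] with ε hε
      show (1 / ε) * dist (δ ε x (δ ε⁻¹ x (δ ε (δ ε x a) x))) (δ ε x a)
          = (1 / ε) * dist (δ ε (δ ε x a) x) (δ ε (δ ε x a) (δ ε x a))
      rw [hri ε hε, hfix ε hε]
    have h5 : dx x (SigL x a x) a = dx x x x :=
      tendsto_nhds_unique ((tendsto_congr' h4).mp h1) h2
    exact hnd x _ _ (by rw [h5, hxx])
  -- (6) right inverse
  have hRinv : ∀ a : X, SigL x a (invL x a) = x := by
    intro a
    rw [hinv_eq]
    exact hSD a x
  -- (7) left inverse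
  have hLinv : ∀ a : X, SigL x (invL x a) a = x := by
    intro a
    set b := invL x a with hb
    have e1 : SigL x a b = x := hRinv a
    have e2 : SigL x b (invL x b) = x := hRinv b
    calc SigL x b a = SigL x (SigL x b a) x := (hRid _).symm
      _ = SigL x (SigL x b a) (SigL x b (invL x b)) := by rw [e2]
      _ = SigL x (SigL x (SigL x b a) b) (invL x b) := hAssoc _ _ _
      _ = SigL x (SigL x b (SigL x a b)) (invL x b) := by rw [hAssoc b a b]
      _ = SigL x (SigL x b x) (invL x b) := by rw [e1]
      _ = SigL x b (invL x b) := by rw [hRid]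
      _ = x := e2
  -- (8) involutivity
  have hInvInv : ∀ a : X, invL x (invL x a) = a := by
    intro a
    have h1 : ΔL x (invL x a) (SigL x (invL x a) a) = a := hDS (invL x a) a
    rw [hLinv a] at h1
    rw [hinv_eq]
    exact h1
  exact ⟨hAssoc u v w, hLid u, hRid u, hRinv u, hLinv u, hInvInv u⟩
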